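/- arXiv:2309.06523 — 2 statements merged into one kernel-verified Lean document; each statement's English description precedes it below -/
import Mathlib

section
/- Let X be a completely regular Hausdorff space and κ an infinite cardinal, and suppose N_Δ, the set of all neighborhoods of the diagonal in X × X ordered by reverse inclusion, has calibre (κ⁺, ω), where κ⁺ is the successor cardinal of κ. Then every compact subset A of X, with the subspace topology, has a topological base of cardinality at most κ. -/
open Set Topology Cardinal
open Filter UniformSpace Uniformity
open scoped SetRel

universe u

/-- A directed set `P` has calibre `(μ, ω)` if every subset of cardinality `μ`
has an infinite subset with an upper bound. -/
def Calibre (P : Type u) [Preorder P] (μ : Cardinal.{u}) : Prop :=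
  ∀ S : Set P, #S = μ → ∃ T ⊆ S, T.Infinite ∧ BddAbove T

/-- The poset of all neighborhoods of the diagonal in `X × X`,
ordered by reverse inclusion. -/
abbrev DiagNbhdPoset (X : Type*) [TopologicalSpace X] :=
  ({U : Set (X × X) // U ∈ nhdsSet (Set.diagonal X)})ᵒᵈ

lemma aux_base {Y : Type u} [UniformSpace Y] [CompactSpace Y]
    (κ : Cardinal.{u}) (hκ : ℵ₀ ≤ κ) {ι : Type u} (hι : #ι ≤ κ)
    (F : ι → Set (Y × Y)) (hFU : ∀ i, F i ∈ 𝓤 Y) (hFc : ∀ i, IsClosed (F i))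
    (hΔ : ⋂ i, F i ⊆ diagonal Y) :
    ∃ B : Set (Set Y), #B ≤ κ ∧ TopologicalSpace.IsTopologicalBasis B := by
  classical
  set Vs : Finset ι → Set (Y × Y) := fun s => interior (⋂ i ∈ s, F i) with hVs
  have hVmem : ∀ s : Finset ι, (⋂ i ∈ s, F i) ∈ 𝓤 Y := fun s =>
    (Filter.biInter_finset_mem s).2 fun i _ => hFU i
  have hVsmem : ∀ s : Finset ι, diagonal Y ⊆ Vs s := fun s => by
    rw [hVs]
    exact subset_interior_iff_mem_nhdsSet.2
      (by rw [nhdsSet_diagonal_eq_uniformity]; exact hVmem s)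
  have hVsopen : ∀ s, IsOpen (Vs s) := fun s => isOpen_interior
  have hcov : ∀ s : Finset ι, ∃ t : Finset Y, Set.univ ⊆ ⋃ x ∈ t, ball x (Vs s) := by
    intro s
    apply isCompact_univ.elim_finite_subcover (fun x : Y => ball x (Vs s))
      (fun x => isOpen_ball x (hVsopen s))
    intro y _
    exact mem_iUnion.2 ⟨y, hVsmem s rfl⟩
  choose t ht using hcov
  refine ⟨⋃ s : Finset ι, (fun x => ball x (Vs s)) '' (t s : Set Y), ?_, ?_⟩
  · calc #(⋃ s : Finset ι, (fun x => ball x (Vs s)) '' (t s : Set Y))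
        ≤ Cardinal.sum (fun s : Finset ι => #((fun x => ball x (Vs s)) '' (t s : Set Y))) :=
          Cardinal.mk_iUnion_le_sum_mk
      _ ≤ Cardinal.sum (fun _ : Finset ι => ℵ₀) := Cardinal.sum_le_sum _ _ fun s =>
          le_of_lt (Cardinal.lt_aleph0_of_finite _)
      _ = #(Finset ι) * ℵ₀ := by simp
      _ ≤ κ * κ := by
          apply mul_le_mul' ?_ hκ
          rcases finite_or_infinite ι with h | h
          · haveI := Fintype.ofFinite ι
            exact le_trans (le_of_lt (Cardinal.lt_aleph0_of_finite _)) hκ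
          · rw [Cardinal.mk_finset_of_infinite]; exact hι
      _ = κ := Cardinal.mul_eq_self hκ
  · apply TopologicalSpace.isTopologicalBasis_of_isOpen_of_nhds
    · rintro b hb
      simp only [mem_iUnion, mem_image] at hb
      obtain ⟨s, x, -, rfl⟩ := hb
      exact isOpen_ball x (hVsopen s)
    · intro x O hxO hO
      obtain ⟨V, hV, hVO⟩ := isOpen_iff_ball_subset.1 hO x hxO
      obtain ⟨W1, hW1, hW1c⟩ := comp_mem_uniformity_sets hV
      obtain ⟨W, ⟨hW, hWo, hWs⟩, hWW1⟩ := uniformity_hasBasis_open_symmetric.mem_iff.1 hW1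
      have hWV : W ○ W ⊆ V := le_trans (SetRel.comp_subset_comp hWW1 hWW1) hW1c
      -- find a finite s with ⋂ i ∈ s, F i ⊆ W
      have hKc : IsCompact (Wᶜ) := (hWo.isClosed_compl).isCompact
      have hKcov : Wᶜ ⊆ ⋃ i, (F i)ᶜ := by
        rintro ⟨z1, z2⟩ hz
        have hzd : (z1, z2) ∉ diagonal Y := by
          rintro (h : z1 = z2)
          exact hz (h ▸ refl_mem_uniformity hW)
        simp only [mem_iUnion, mem_compl_iff]
        by_contra hcon
        push_neg at hcon
        exact hzd (hΔ (mem_iInter.2 hcon))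
      obtain ⟨s, hs⟩ := hKc.elim_finite_subcover (fun i => (F i)ᶜ) (fun i => (hFc i).isOpen_compl) hKcov
      have hsW : (⋂ i ∈ s, F i) ⊆ W := by
        intro z hz
        by_contra hzW
        obtain ⟨i, his, hzi⟩ := mem_iUnion₂.1 (hs hzW)
        exact hzi (mem_iInter₂.1 hz i his)
      have hVsW : Vs s ⊆ W := le_trans interior_subset hsW
      obtain ⟨c, hct, hcx⟩ := mem_iUnion₂.1 (ht s (mem_univ x))
      refine ⟨ball c (Vs s), ?_, hcx, ?_⟩
      · exact mem_iUnion.2 ⟨s, mem_image_of_mem _ hct⟩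
      · intro z hz
        apply hVO
        have h1 : (c, x) ∈ W := hVsW hcx
        have h2 : (c, z) ∈ W := hVsW hz
        have h3 : (x, c) ∈ W := hWs.symm _ _ h1
        exact hWV (SetRel.prodMk_mem_comp h3 h2)

lemma aux_core {Y : Type u} [UniformSpace Y] [CompactSpace Y] [T2Space Y]
    (κ : Cardinal.{u}) (hκ : ℵ₀ ≤ κ)
    (hcal : ∀ V : (Order.succ κ).ord.ToType → Set (Y × Y), Function.Injective V →
      (∀ i, V i ∈ 𝓤 Y) → ∃ T : Set (Order.succ κ).ord.ToType,
        T.Infinite ∧ (⋂ i ∈ T, V i) ∈ 𝓤 Y) :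
    ∃ B : Set (Set Y), #B ≤ κ ∧ TopologicalSpace.IsTopologicalBasis B := by
  classical
  by_contra hbase
  -- step: from any small family of closed entourages, find a new entourage and witness point
  have step : ∀ G : Set (Set (Y × Y)), #G ≤ κ → (∀ W ∈ G, W ∈ 𝓤 Y ∧ IsClosed W) →
      ∃ Vp : Set (Y × Y) × (Y × Y), Vp.1 ∈ 𝓤 Y ∧ IsClosed Vp.1 ∧ SetRel.IsSymm Vp.1 ∧
        Vp.2 ∈ ⋂₀ G ∧ Vp.2 ∉ Vp.1 ○ Vp.1 ○ Vp.1 := by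
    intro G hGcard hGmem
    by_contra hstep
    push_neg at hstep
    have hsub : ⋂₀ G ⊆ diagonal Y := by
      rintro ⟨x, y⟩ hxy
      have : x = y := by
        apply eq_of_uniformity (α := Y)
        intro W hW
        obtain ⟨V1, hV1, hV1c⟩ := comp_mem_uniformity_sets hW
        obtain ⟨V2, hV2, hV2c⟩ := comp_mem_uniformity_sets hV1
        have hV21 : V2 ⊆ V1 := subset_comp_self_of_mem_uniformity hV2 |>.trans hV2c
        obtain ⟨V3, ⟨hV3, hV3cl⟩, hV32⟩ := uniformity_hasBasis_closed.mem_iff.1 hV2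
        set V := SetRel.symmetrize V3 with hVdef
        have hVU : V ∈ 𝓤 Y := symmetrize_mem_uniformity hV3
        have hVcl : IsClosed V := hV3cl.inter (hV3cl.preimage continuous_swap)
        have hVsym : SetRel.IsSymm V := SetRel.isSymm_symmetrize
        have hV2' : V ⊆ V2 := (SetRel.symmetrize_subset_self (R := V3)).trans hV32
        have h3 : V ○ V ○ V ⊆ W := by
          calc V ○ V ○ V ⊆ V2 ○ V2 ○ V2 :=
                SetRel.comp_subset_comp (SetRel.comp_subset_comp hV2' hV2') hV2'
            _ ⊆ V1 ○ V2 := SetRel.comp_subset_comp hV2c (Subset.refl _)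
            _ ⊆ V1 ○ V1 := SetRel.comp_subset_comp (Subset.refl _) hV21
            _ ⊆ W := hV1c
        exact h3 (hstep (V, (x, y)) hVU hVcl hVsym hxy)
      exact this
    -- now ⋂₀ G = diagonal, so we get a small base, contradiction
    refine hbase (aux_base κ hκ hGcard (fun W : G => (W : Set (Y × Y)))
      (fun W => (hGmem W W.2).1) (fun W => (hGmem W W.2).2) ?_)
    rw [← sInter_eq_iInter]
    exact hsub
  -- transfinite construction
  set ι := (Order.succ κ).ord.ToType with hι
  have hex : ∀ (x : ι) (prior : ∀ y : ι, y < x → Set (Y × Y) × (Y × Y)),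
      ∃ Vp : Set (Y × Y) × (Y × Y), Vp.1 ∈ 𝓤 Y ∧ IsClosed Vp.1 ∧ SetRel.IsSymm Vp.1 ∧
        Vp.2 ∈ ⋂₀ {W | (∃ y : ι, ∃ h : y < x, W = (prior y h).1) ∧ W ∈ 𝓤 Y ∧ IsClosed W} ∧
        Vp.2 ∉ Vp.1 ○ Vp.1 ○ Vp.1 := by
    intro x prior
    apply step
    · calc #({W | (∃ y : ι, ∃ h : y < x, W = (prior y h).1) ∧ W ∈ 𝓤 Y ∧ IsClosed W})
          ≤ #({W | ∃ y : ι, ∃ h : y < x, W = (prior y h).1}) :=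
            Cardinal.mk_le_mk_of_subset (fun W hW => hW.1)
        _ ≤ #(Iio x) := ?_
        _ ≤ κ := Order.lt_succ_iff.1 (Cardinal.mk_Iio_ord_toType x)
      have hsurj : {W | ∃ y : ι, ∃ h : y < x, W = (prior y h).1} ⊆
          range (fun y : Iio x => (prior y.1 y.2).1) := by
        rintro W ⟨y, hy, rfl⟩
        exact ⟨⟨y, hy⟩, rfl⟩
      exact (Cardinal.mk_le_mk_of_subset hsurj).trans Cardinal.mk_range_le
    · exact fun W hW => hW.2
  set f : ι → Set (Y × Y) × (Y × Y) :=
    WellFoundedLT.fix (motive := fun _ => Set (Y × Y) × (Y × Y))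
      (fun x prior => (hex x prior).choose) with hfdef
  have hfix : ∀ x : ι, f x = (hex x fun y _ => f y).choose := fun x => by
    rw [hfdef]
    exact WellFoundedLT.fix_eq _ x
  set V : ι → Set (Y × Y) := fun i => (f i).1 with hVdef
  set p : ι → Y × Y := fun i => (f i).2 with hpdef
  have hspec : ∀ x : ι, V x ∈ 𝓤 Y ∧ IsClosed (V x) ∧ SetRel.IsSymm (V x) ∧
      p x ∈ ⋂₀ {W | (∃ y : ι, ∃ h : y < x, W = V y) ∧ W ∈ 𝓤 Y ∧ IsClosed W} ∧
      p x ∉ V x ○ V x ○ V x := by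
    intro x
    have h := (hex x fun y _ => f y).choose_spec
    rw [← hfix x] at h
    exact h
  have hVU : ∀ i, V i ∈ 𝓤 Y := fun i => (hspec i).1
  have hVcl : ∀ i, IsClosed (V i) := fun i => (hspec i).2.1
  have hp : ∀ {j i : ι}, j < i → p i ∈ V j := by
    intro j i hji
    exact (hspec i).2.2.2.1 _ ⟨⟨j, hji, rfl⟩, hVU j, hVcl j⟩
  have hpnot : ∀ i, p i ∉ V i ○ V i ○ V i := fun i => (hspec i).2.2.2.2
  have hpnotV : ∀ i, p i ∉ V i := by
    intro i hmem
    apply hpnot i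
    have h : ((p i).1, (p i).2) ∈ V i ○ V i ○ V i :=
      SetRel.prodMk_mem_comp
        (SetRel.prodMk_mem_comp (by simpa using hmem) (refl_mem_uniformity (hVU i)))
        (refl_mem_uniformity (hVU i))
    simpa using h
  have hVinj : Function.Injective V := by
    intro i j hij
    by_contra hne
    rcases lt_or_gt_of_ne hne with h | h
    · exact hpnotV j (hij ▸ hp h)
    · exact hpnotV i (hij.symm ▸ hp h)
  obtain ⟨T, hTinf, hTU⟩ := hcal V hVinj hVU
  set U : Set (Y × Y) := ⋂ i ∈ T, V i with hUdef
  set E : Set (Y × Y) := SetRel.symmetrize U with hEdef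
  have hEU : E ∈ 𝓤 Y := symmetrize_mem_uniformity hTU
  have hEsym : SetRel.IsSymm E := SetRel.isSymm_symmetrize
  have hEsubU : E ⊆ U := SetRel.symmetrize_subset_self (R := U)
  have hEsubV : ∀ i ∈ T, E ⊆ V i := fun i hi =>
    hEsubU.trans (biInter_subset_of_mem hi)
  -- extract a strictly monotone sequence in T
  obtain ⟨seq, hseqmono, hseqT⟩ : ∃ seq : ℕ → ι, StrictMono seq ∧ ∀ n, seq n ∈ T := by
    have e := hTinf.natEmbedding
    set f0 : ℕ → ι := fun n => (e n : ι) with hf0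
    have hf0inj : Function.Injective f0 := fun m n h => e.injective (Subtype.ext h)
    have hpwo : (Set.univ : Set ι).IsPWO :=
      (Set.isWF_univ_iff.2 inferInstance).isPWO
    obtain ⟨g, hg⟩ := hpwo.exists_monotone_subseq (f := f0) (fun n => mem_univ _)
    refine ⟨f0 ∘ g, ?_, fun n => (e (g n)).2⟩
    intro m n hmn
    exact lt_of_le_of_ne (hg hmn.le)
      (fun hc => (hmn.ne (g.injective (hf0inj hc))))
  -- a cluster point of the sequence of witness points
  have : (Filter.map (fun n => p (seq n)) Filter.atTop).NeBot := Filter.map_neBot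
  obtain ⟨q, hq⟩ := exists_clusterPt_of_compactSpace
    (Filter.map (fun n => p (seq n)) Filter.atTop)
  have hfreq : ∀ N ∈ 𝓝 q, ∀ n₀ : ℕ, ∃ n, n₀ ≤ n ∧ p (seq n) ∈ N := by
    intro N hN n₀
    have htail : {y : Y × Y | ∃ n, n₀ ≤ n ∧ y = p (seq n)} ∈
        Filter.map (fun n => p (seq n)) Filter.atTop := by
      rw [Filter.mem_map]
      filter_upwards [Filter.mem_atTop n₀] with n hn
      exact ⟨n, hn, rfl⟩
    obtain ⟨y, hyN, n, hn, rfl⟩ := (clusterPt_iff_nonempty.1 hq hN htail)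
    exact ⟨n, hn, hyN⟩
  have hqV : ∀ n, q ∈ V (seq n) := by
    intro n
    rw [← (hVcl (seq n)).closure_eq]
    rw [mem_closure_iff_nhds]
    intro N hN
    obtain ⟨m, hm, hmN⟩ := hfreq N hN (n + 1)
    exact ⟨p (seq m), hmN, hp (hseqmono (Nat.lt_of_succ_le hm))⟩
  -- final contradiction
  have hball : (ball q.1 E) ×ˢ (ball q.2 E) ∈ 𝓝 q := by
    have := prod_mem_nhds (ball_mem_nhds q.1 hEU) (ball_mem_nhds q.2 hEU)
    simpa using this
  obtain ⟨n, -, hn⟩ := hfreq _ hball 0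
  obtain ⟨h1, h2⟩ := hn
  -- h1 : (q.1, (p (seq n)).1) ∈ E, h2 : (q.2, (p (seq n)).2) ∈ E
  apply hpnot (seq n)
  have hx : ((p (seq n)).1, q.1) ∈ V (seq n) := hEsubV _ (hseqT n) (hEsym.symm _ _ h1)
  have hmid : (q.1, q.2) ∈ V (seq n) := by simpa using hqV n
  have hy : (q.2, (p (seq n)).2) ∈ V (seq n) := hEsubV _ (hseqT n) h2
  have h : ((p (seq n)).1, (p (seq n)).2) ∈ V (seq n) ○ V (seq n) ○ V (seq n) :=
    SetRel.prodMk_mem_comp (SetRel.prodMk_mem_comp hx hmid) hy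
  simpa using h

/-- If the neighborhood filter of the diagonal of a completely regular Hausdorff space
has calibre `(κ⁺, ω)`, then every compact subset has a topological base of
cardinality at most `κ`. -/
theorem stmt16 {X : Type u} [TopologicalSpace X] [CompletelyRegularSpace X] [T2Space X]
    (κ : Cardinal.{u}) (hκ : ℵ₀ ≤ κ)
    (hcal : Calibre (DiagNbhdPoset X) (Order.succ κ))
    (A : Set X) (hA : IsCompact A) :
    ∃ B : Set (Set A), #B ≤ κ ∧ TopologicalSpace.IsTopologicalBasis B := by
  classical
  haveI : CompactSpace ↥A := isCompact_iff_compactSpace.mp hA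
  letI uA : UniformSpace ↥A := uniformSpaceOfCompactR1
  have huni : 𝓤 ↥A = 𝓝ˢ (diagonal ↥A) := nhdsSet_diagonal_eq_uniformity.symm
  set j : ↥A × ↥A → X × X := Prod.map (↑) (↑) with hjdef
  have hjcont : Continuous j := continuous_subtype_val.prodMap continuous_subtype_val
  have hjrange : ∀ z : ↥A × ↥A, j z ∈ A ×ˢ A := fun z => ⟨z.1.2, z.2.2⟩
  -- preimages of diagonal neighborhoods are entourages
  have hpre : ∀ s ∈ 𝓝ˢ (diagonal X), j ⁻¹' s ∈ 𝓤 ↥A := by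
    intro s hs
    obtain ⟨O, hO, hdO, hOs⟩ := mem_nhdsSet_iff_exists.1 hs
    rw [huni]
    rw [mem_nhdsSet_iff_exists]
    refine ⟨j ⁻¹' O, hO.preimage hjcont, ?_, preimage_mono hOs⟩
    rintro ⟨y, z⟩ (h : y = z)
    exact hdO (by simp [hjdef, h, mem_diagonal_iff])
  -- extension of entourages of A to diagonal neighborhoods of X
  have hext : ∀ W ∈ 𝓤 ↥A, ∃ s ∈ 𝓝ˢ (diagonal X), j ⁻¹' s ⊆ W := by
    intro W hW
    rw [huni, mem_nhdsSet_iff_exists] at hW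
    obtain ⟨O, hO, hdO, hOW⟩ := hW
    have hjemb : Topology.IsEmbedding j :=
      Topology.IsEmbedding.subtypeVal.prodMap Topology.IsEmbedding.subtypeVal
    obtain ⟨O', hO', hO'O⟩ := hjemb.isInducing.isOpen_iff.1 hO
    have hAcl : IsClosed (A ×ˢ A) := (hA.isClosed).prod (hA.isClosed)
    refine ⟨O' ∪ (A ×ˢ A)ᶜ, ?_, ?_⟩
    · apply (hO'.union hAcl.isOpen_compl).mem_nhdsSet.2
      rintro ⟨y, z⟩ (h : y = z)
      subst h
      by_cases hy : y ∈ A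
      · left
        have : ((⟨y, hy⟩, ⟨y, hy⟩) : ↥A × ↥A) ∈ j ⁻¹' O' := by
          rw [hO'O]; exact hdO rfl
        exact this
      · exact Or.inr fun hc => hy hc.1
    · intro z hz
      rcases hz with hz | hz
      · exact hOW (hO'O ▸ hz)
      · exact absurd (hjrange z) hz
  -- transfer calibre and apply the core lemma
  apply aux_core κ hκ
  intro V hVinj hVU
  choose E hE1 hE2 using fun i => hext (V i) (hVU i)
  by_cases hc1 : ∃ s, {i | E i = s}.Infinite
  · obtain ⟨s, hs⟩ := hc1
    obtain ⟨i₀, hi₀⟩ := hs.nonempty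
    refine ⟨{i | E i = s}, hs, ?_⟩
    apply Filter.mem_of_superset (hpre s (hi₀ ▸ hE1 i₀))
    intro z hz
    rw [mem_iInter₂]
    intro i hi
    exact hE2 i (by rwa [hi])
  · push_neg at hc1
    set Φ : (Order.succ κ).ord.ToType → DiagNbhdPoset X :=
      fun i => OrderDual.toDual ⟨E i, hE1 i⟩ with hΦdef
    have hΦfib : ∀ b : DiagNbhdPoset X, (Φ ⁻¹' {b}).Finite := by
      intro b
      apply (hc1 (OrderDual.ofDual b).1).subset
      intro i hi
      simp only [mem_preimage, mem_singleton_iff, hΦdef] at hi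
      simp only [mem_setOf_eq, ← hi]
      rfl
    set S : Set (DiagNbhdPoset X) := range Φ with hSdef
    have hScard : #S = Order.succ κ := by
      apply le_antisymm
      · exact mk_range_le.trans_eq (by rw [mk_ord_toType])
      · by_contra hlt
        push_neg at hlt
        have hSκ : #S ≤ κ := Order.lt_succ_iff.1 hlt
        have h1 : (Order.succ κ : Cardinal) ≤ #S * ℵ₀ := by
          have h := Cardinal.mk_le_mk_mul_of_mk_preimage_le (Set.rangeFactorization Φ)
            (c := ℵ₀) ?_
          · rwa [mk_ord_toType] at h
          · intro b
            apply le_of_lt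
            have hfin : (Set.rangeFactorization Φ ⁻¹' {b}).Finite := by
              apply (hΦfib b.1).subset
              intro i hi
              simp only [mem_preimage, mem_singleton_iff] at hi ⊢
              rw [← hi]
              rfl
            exact hfin.lt_aleph0
        have h2 : #S * ℵ₀ ≤ κ :=
          le_trans (mul_le_mul' hSκ hκ) (le_of_eq (Cardinal.mul_eq_self hκ))
        exact absurd (h1.trans h2) (not_le_of_gt (Order.lt_succ_of_not_isMax (not_isMax κ)))
    obtain ⟨T', hT'S, hT'inf, u, hu⟩ := hcal S hScard
    refine ⟨Φ ⁻¹' T', ?_, ?_⟩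
    · intro hfin
      apply hT'inf
      apply (hfin.image Φ).subset
      intro t ht
      obtain ⟨i, rfl⟩ := hT'S ht
      exact mem_image_of_mem Φ ht
    · apply Filter.mem_of_superset (hpre (OrderDual.ofDual u).1 (OrderDual.ofDual u).2)
      intro z hz
      rw [mem_iInter₂]
      intro i hi
      apply hE2 i
      have hle : OrderDual.ofDual u ≤ OrderDual.ofDual (Φ i) := hu hi
      have hsub : (OrderDual.ofDual u).1 ⊆ E i := hle
      exact preimage_mono hsub hz
end

section
/- Let X be a completely regular Hausdorff space such that N_Δ, the set of all neighborhoods of the diagonal in X × X ordered by reverse inclusion, has calibre (ω₁, ω). If X is countably compact (every countable open cover of X has a finite subcover), then X is compact. -/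
open Set Topology Cardinal

universe u

lemma accumPt {X : Type u} [TopologicalSpace X]
    (hcc : ∀ 𝒰 : Set (Set X), 𝒰.Countable → (∀ U ∈ 𝒰, IsOpen U) →
      ⋃₀ 𝒰 = Set.univ → ∃ F ⊆ 𝒰, F.Finite ∧ ⋃₀ F = Set.univ)
    (e : ℕ → X) : ∃ z : X, ∀ O ∈ 𝓝 z, ∀ n : ℕ, ∃ k ≥ n, e k ∈ O := by
  have key : (⋂ n : ℕ, closure (e '' Ici n)).Nonempty := by
    by_contra hempty
    rw [not_nonempty_iff_eq_empty] at hempty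
    set g : ℕ → Set X := fun n => (closure (e '' Ici n))ᶜ with hg
    obtain ⟨F, hFsub, hFfin, hFcov⟩ := hcc (range g) (countable_range g)
      (by rintro U ⟨n, rfl⟩; exact isOpen_compl_iff.2 isClosed_closure)
      (by rw [sUnion_range]; simp [g, ← compl_iInter, hempty])
    choose! idx hidx using fun s (hs : s ∈ F) => hFsub hs
    have hfin : (idx '' F).Finite := hFfin.image _
    obtain ⟨N, hN⟩ := hfin.bddAbove
    have hmem : e (N+1) ∈ ⋃₀ F := hFcov ▸ mem_univ _
    obtain ⟨s, hsF, hes⟩ := hmem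
    rw [← hidx s hsF] at hes
    apply hes
    apply subset_closure
    refine mem_image_of_mem e (mem_Ici.2 ?_)
    have h2 : idx s ≤ N := hN (mem_image_of_mem idx hsF)
    omega
  obtain ⟨z, hz⟩ := key
  refine ⟨z, fun O hO n => ?_⟩
  have hz' : z ∈ closure (e '' Ici n) := mem_iInter.1 hz n
  obtain ⟨y, hyO, hy⟩ := mem_closure_iff_nhds.1 hz' O hO
  obtain ⟨k, hk, rfl⟩ := hy
  exact ⟨k, hk, hyO⟩


/-- A countably compact, completely regular Hausdorff space whose neighborhood filter
of the diagonal has calibre `(ω₁, ω)` is compact. -/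
theorem stmt17 {X : Type u} [TopologicalSpace X] [CompletelyRegularSpace X] [T2Space X]
    (hcal : Calibre (DiagNbhdPoset X) (Cardinal.aleph 1))
    (hcc : ∀ 𝒰 : Set (Set X), 𝒰.Countable → (∀ U ∈ 𝒰, IsOpen U) →
      ⋃₀ 𝒰 = Set.univ → ∃ F ⊆ 𝒰, F.Finite ∧ ⋃₀ F = Set.univ) :
    CompactSpace X := by
  by_contra hnc
  -- Obtain a cover with no finite subcover
  have hbad : ∃ 𝒰 : Set (Set X), (∀ U ∈ 𝒰, IsOpen U) ∧ ⋃₀ 𝒰 = Set.univ ∧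
      ∀ F ⊆ 𝒰, F.Finite → ⋃₀ F ≠ Set.univ := by
    by_contra h
    push_neg at h
    refine hnc ⟨isCompact_of_finite_subcover fun {ι} U hUo hUc => ?_⟩
    obtain ⟨F, hFsub, hFfin, hFcov⟩ := h (range U)
      (by rintro V ⟨i, rfl⟩; exact hUo i)
      (by rw [sUnion_range]; exact univ_subset_iff.1 hUc)
    classical
    choose idx hidx using fun s : F => hFsub s.2
    refine ⟨hFfin.toFinset.attach.image fun s => idx ⟨s.1, hFfin.mem_toFinset.1 s.2⟩,
      fun p _ => ?_⟩
    have hp : p ∈ ⋃₀ F := hFcov ▸ mem_univ p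
    obtain ⟨s, hsF, hps⟩ := hp
    simp only [Finset.mem_image, mem_iUnion]
    refine ⟨idx ⟨s, hsF⟩, ⟨⟨s, hFfin.mem_toFinset.2 hsF⟩, Finset.mem_attach _ _, rfl⟩, ?_⟩
    rw [hidx ⟨s, hsF⟩]; exact hps
  obtain ⟨𝒰, hUo, hUcov, hnofin⟩ := hbad
  classical
  -- choose a member of the cover containing each point
  have hUof : ∀ p : X, ∃ U ∈ 𝒰, p ∈ U := fun p => by
    have : p ∈ ⋃₀ 𝒰 := hUcov ▸ mem_univ p
    exact this
  choose Uof hUof𝒰 hUofmem using hUof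
  -- no countable subfamily covers
  have claim : ∀ C : Set X, C.Countable → ∃ p : X, ∀ q ∈ C, p ∉ Uof q := by
    intro C hC
    by_contra hno
    push_neg at hno
    obtain ⟨F, hFsub, hFfin, hFcov⟩ := hcc (Uof '' C) (hC.image _)
      (by rintro V ⟨q, _, rfl⟩; exact hUo _ (hUof𝒰 q))
      (by
        apply eq_univ_of_forall
        intro p
        obtain ⟨q, hq, hp⟩ := hno p
        exact ⟨Uof q, mem_image_of_mem _ hq, hp⟩)
    exact hnofin F (hFsub.trans (by rintro V ⟨q, _, rfl⟩; exact hUof𝒰 q)) hFfin hFcov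
  -- transfinite construction along ω₁
  set κ := (Cardinal.aleph 1 : Cardinal.{u}).ord.ToType with hκ
  have hcntIio : ∀ α : κ, (Set.Iio α).Countable :=
    fun α => (Cardinal.countable_iff_lt_aleph_one _).2 (Cardinal.mk_Iio_ord_toType α)
  have wf : WellFounded ((· < ·) : κ → κ → Prop) := IsWellFounded.wf
  set G : (α : κ) → ((β : κ) → β < α → X) → X := fun α ih =>
    Classical.choose (claim (range fun β : Set.Iio α => ih β.1 β.2)
      (by have := (hcntIio α).to_subtype; exact Set.countable_range _)) with hGdef
  set x : κ → X := wf.fix G with hxdef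
  have hxeq : ∀ α, x α = G α fun β _ => x β := fun α => wf.fix_eq G α
  have hkey : ∀ β α : κ, β < α → x α ∉ Uof (x β) := by
    intro β α hβα
    rw [hxeq α]
    exact Classical.choose_spec (claim (range fun β : Set.Iio α => x β.1)
      (by have := (hcntIio α).to_subtype; exact Set.countable_range _)) (x β) ⟨⟨β, hβα⟩, rfl⟩
  have hxinj : Function.Injective x := by
    intro β α heq
    rcases lt_trichotomy β α with h | h | h
    · exact absurd (heq ▸ hUofmem (x β)) (hkey β α h)
    · exact h
    · exact absurd (heq ▸ hUofmem (x α)) (hkey α β h)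
  -- separating functions
  have hreg : ∀ α : κ, ∃ g : X → unitInterval, Continuous g ∧ g (x α) = 0 ∧
      EqOn g 1 (Uof (x α))ᶜ := fun α =>
    CompletelyRegularSpace.completely_regular (x α) (Uof (x α))ᶜ
      (hUo _ (hUof𝒰 (x α))).isClosed_compl (by simp [hUofmem (x α)])
  choose f hfc hf0 hf1 using hreg
  -- neighborhoods of the diagonal
  set W : κ → Set (X × X) := fun α =>
    {p : X × X | |((f α p.1 : ℝ)) - ((f α p.2 : ℝ))| < 1/2} with hWdef
  have hWopen : ∀ α, IsOpen (W α) := by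
    intro α
    apply isOpen_lt _ continuous_const
    exact ((continuous_subtype_val.comp ((hfc α).comp continuous_fst)).sub
      (continuous_subtype_val.comp ((hfc α).comp continuous_snd))).abs
  have hWmem : ∀ α, W α ∈ 𝓝ˢ (Set.diagonal X) := by
    intro α
    refine (hWopen α).mem_nhdsSet.2 ?_
    rintro ⟨p, q⟩ hpq
    have : p = q := hpq
    subst this
    simp [W]
  set w : κ → DiagNbhdPoset X := fun α => OrderDual.toDual ⟨W α, hWmem α⟩ with hwdef
  -- dichotomy: get an infinite A ⊆ κ and V ∈ N_Δ with V ⊆ W α for all α ∈ A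
  have hAV : ∃ A : Set κ, ∃ V : Set (X × X), A.Infinite ∧ V ∈ 𝓝ˢ (Set.diagonal X) ∧
      ∀ α ∈ A, V ⊆ W α := by
    by_cases hfib : ∃ t : DiagNbhdPoset X, {α : κ | w α = t}.Infinite
    · obtain ⟨t, ht⟩ := hfib
      refine ⟨{α | w α = t}, (OrderDual.ofDual t).1, ht, (OrderDual.ofDual t).2, ?_⟩
      intro α hα
      have hWt : W α = (OrderDual.ofDual t).1 := by
        rw [← hα]; rfl
      rw [hWt]
    · push_neg at hfib
      have hκcard : #κ = Cardinal.aleph 1 := by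
        rw [hκ, Cardinal.mk_toType, Cardinal.card_ord]
      have hrange : #(range w) = Cardinal.aleph 1 := by
        refine le_antisymm (le_trans mk_range_le (le_of_eq hκcard)) ?_
        by_contra hlt
        rw [not_le] at hlt
        have hcnt : (range w).Countable := (Cardinal.countable_iff_lt_aleph_one _).2 hlt
        have huniv : (Set.univ : Set κ).Countable := by
          have heq : (⋃ t ∈ range w, {α : κ | w α = t}) = Set.univ := by
            ext α; simp
          rw [← heq]
          exact hcnt.biUnion fun t _ => (hfib t).countable
        have : Countable κ := by
          rw [← Set.countable_univ_iff]; exact huniv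
        have := Cardinal.mk_le_aleph0 (α := κ)
        rw [hκcard] at this
        exact absurd this (not_le.2 Cardinal.aleph0_lt_aleph_one)
      obtain ⟨T, hTsub, hTinf, V', hV'⟩ := hcal (range w) hrange
      choose sec hsec using fun t : T => hTsub t.2
      haveI : Infinite T := hTinf.to_subtype
      have hsecinj : Function.Injective sec := by
        intro t1 t2 h
        apply Subtype.ext
        rw [← hsec t1, ← hsec t2, h]
      refine ⟨range sec, (OrderDual.ofDual V').1, Set.infinite_range_of_injective hsecinj,
        (OrderDual.ofDual V').2, ?_⟩
      rintro α ⟨t, rfl⟩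
      have hle : t.1 ≤ V' := hV' t.2
      have : (OrderDual.ofDual V').1 ⊆ (OrderDual.ofDual t.1).1 := hle
      refine this.trans ?_
      rw [← hsec t]
      exact subset_rfl
  obtain ⟨A, V, hAinf, hVnh, hVsub⟩ := hAV
  set emb := hAinf.natEmbedding with hembdef
  set e : ℕ → X := fun n => x (emb n).1 with hedef
  obtain ⟨z, hz⟩ := accumPt hcc e
  have hVz : V ∈ 𝓝 (z, z) := mem_nhdsSet_iff_forall.1 hVnh (z, z) rfl
  obtain ⟨u, hu, v, hv, huv⟩ := mem_nhds_prod_iff.1 hVz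
  have hO : u ∩ v ∈ 𝓝 z := Filter.inter_mem hu hv
  obtain ⟨k0, -, hk0⟩ := hz (u ∩ v) hO 0
  obtain ⟨k1, hk1ge, hk1⟩ := hz (u ∩ v) hO (k0 + 1)
  have hkne : (emb k0).1 ≠ (emb k1).1 := by
    intro h
    have : emb k0 = emb k1 := Subtype.ext h
    have := emb.injective this
    omega
  have final : ∀ γ δ : κ, γ ∈ A → δ ∈ A → γ < δ → x γ ∈ u ∩ v → x δ ∈ u ∩ v → False := by
    intro γ δ hγ hδ hlt hγO hδO
    have hp : (x γ, x δ) ∈ V := huv ⟨hγO.1, hδO.2⟩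
    have hw : |((f γ (x γ) : ℝ)) - ((f γ (x δ) : ℝ))| < 1/2 := hVsub γ hγ hp
    have h0 : f γ (x γ) = 0 := hf0 γ
    have h1 : f γ (x δ) = 1 := hf1 γ (hkey γ δ hlt)
    rw [h0, h1] at hw
    norm_num at hw
  rcases lt_trichotomy ((emb k0).1 : κ) ((emb k1).1 : κ) with h | h | h
  · exact final _ _ (emb k0).2 (emb k1).2 h hk0 hk1
  · exact hkne h
  · exact final _ _ (emb k1).2 (emb k0).2 h hk1 hk0
end
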